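/- Let (F_t)_{t≥0} be a filtration on a probability space and let (X_t)_{t≥1} be a sequence of {0,1}-valued random variables such that X_t is F_t-measurable for each t; write P_t = E[X_t | F_{t−1}]. Then for every ε ∈ (0,1) and every integer c̄ ≥ 1: P( ∃ t ≥ 1 such that Σ_{τ=1}^t X_τ ≥ c̄ and Σ_{τ=1}^t P_τ ≤ c̄·(1 − ε/(1+ε)) ) ≤ exp( −ε²·c̄ / (2(1+ε)²) ). -/

import Mathlib

open MeasureTheory Finset

lemma aux_log {x : ℝ} (h0 : 0 ≤ x) (h1 : x ≤ 1/2) :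
    x + x^2/2 ≤ -Real.log (1-x) := by
  have hx : |x| < 1 := by rw [abs_of_nonneg h0]; linarith
  have h := Real.abs_log_sub_add_sum_range_le hx 5
  rw [abs_le] at h
  obtain ⟨-, h2⟩ := h
  rw [abs_of_nonneg h0] at h2
  simp only [Finset.sum_range_succ, Finset.sum_range_zero] at h2
  have hden : (0:ℝ) < 1 - x := by linarith
  have hx3 : x^3 ≤ 1/8 := by nlinarith
  have hmul : 0 ≤ x^3 * (5/24 - x/3) :=
    mul_nonneg (pow_nonneg h0 3) (by linarith)
  have hfrac : x^(5+1)/(1-x) ≤ x^3/3 := by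
    rw [div_le_iff₀ hden]
    nlinarith [pow_nonneg h0 3, hx3, hmul]
  have h4 : 0 ≤ x^4/4 := by positivity
  have h5 : 0 ≤ x^5/5 := by positivity
  norm_num at h2
  nlinarith [h2, hfrac]

lemma aux_maximal {Ω : Type*} {m0 : MeasurableSpace Ω} {μ : Measure Ω}
    [IsFiniteMeasure μ] {𝒢 : Filtration ℕ m0} {M : ℕ → Ω → ℝ}
    (hM : Supermartingale M 𝒢 μ) (hnn : ∀ t ω, 0 ≤ M t ω) {K : ℝ} (hK : 0 < K) (n : ℕ) :
    K * (μ {ω | ∃ t ≤ n, K ≤ M t ω}).toReal ≤ ∫ ω, M 0 ω ∂μ := by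
  set A := {ω | ∃ t ≤ n, K ≤ M t ω} with hA
  have hAmeas : MeasurableSet A := by
    have : A = ⋃ t ∈ Set.Iic n, {ω | K ≤ M t ω} := by
      ext ω; simp [hA]
    rw [this]
    refine MeasurableSet.biUnion (Set.to_countable _) fun t _ => ?_
    exact measurableSet_le measurable_const
      ((hM.stronglyMeasurable t).measurable.le (𝒢.le t))
  set τ : Ω → ℕ∞ := fun ω => ((hittingBtwn M (Set.Ici K) 0 n ω : ℕ) : ℕ∞) with hτdef
  have hτ : IsStoppingTime 𝒢 τ := hM.stronglyAdapted.adapted.isStoppingTime_hittingBtwn measurableSet_Ici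
  have hτle : ∀ ω, τ ω ≤ n := fun ω => Nat.cast_le.mpr (hittingBtwn_le ω)
  have hintneg : Integrable (stoppedValue (-M) τ) μ :=
    hM.neg.integrable_stoppedValue hτ hτle
  have hneg : stoppedValue (-M) τ = -(stoppedValue M τ) := rfl
  have hint : Integrable (stoppedValue M τ) μ := by
    have := hintneg.neg
    rwa [hneg, neg_neg] at this
  have hstop : ∫ ω, stoppedValue M τ ω ∂μ ≤ ∫ ω, M 0 ω ∂μ := by
    have h := hM.neg.expected_stoppedValue_mono (isStoppingTime_const 𝒢 0) hτ
      (fun ω => WithTop.coe_le_coe.mpr (Nat.zero_le _)) hτle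
    have h0 : stoppedValue (-M) (fun _ => ((0:ℕ) : WithTop ℕ)) = -(M 0) := rfl
    rw [hneg] at h
    change ∫ x, (-(M 0)) x ∂μ ≤ _ at h
    simp only [Pi.neg_apply, integral_neg] at h
    linarith
  have hAle : ∀ ω ∈ A, K ≤ stoppedValue M τ ω := by
    intro ω hω
    obtain ⟨t, htn, htK⟩ := hω
    have : stoppedValue M τ ω ∈ Set.Ici K :=
      stoppedValue_hittingBtwn_mem ⟨t, ⟨Nat.zero_le _, htn⟩, htK⟩
    exact this
  have h1 : K * (μ A).toReal ≤ ∫ ω in A, stoppedValue M τ ω ∂μ :=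
    by have := setIntegral_ge_of_const_le hAmeas (measure_ne_top μ A) hAle hint.integrableOn
       rwa [smul_eq_mul, mul_comm] at this
  have h2 : ∫ ω in A, stoppedValue M τ ω ∂μ ≤ ∫ ω, stoppedValue M τ ω ∂μ :=
    setIntegral_le_integral hint (Filter.Eventually.of_forall fun ω => hnn _ _)
  linarith

/-- Let (F_t) be a filtration and (X_t)_{t≥1} a sequence of {0,1}-valued random
variables with X_t F_t-measurable; write P_t = E[X_t | F_{t−1}]. For every ε ∈ (0,1) and
integer c̄ ≥ 1,
P(∃ t ≥ 1, Σ_{τ≤t} X_τ ≥ c̄ and Σ_{τ≤t} P_τ ≤ c̄(1 − ε/(1+ε))) ≤ exp(−ε²c̄/(2(1+ε)²)). -/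
theorem adaptive_upper_deviation_bound {Ω : Type*} {m0 : MeasurableSpace Ω}
    (μ : Measure Ω) [IsProbabilityMeasure μ] (ℱ : Filtration ℕ m0)
    (X : ℕ → Ω → ℝ)
    (hmeas : ∀ t : ℕ, 1 ≤ t → StronglyMeasurable[ℱ t] (X t))
    (hval : ∀ t : ℕ, 1 ≤ t → ∀ ω : Ω, X t ω = 0 ∨ X t ω = 1)
    (ε : ℝ) (hε0 : 0 < ε) (hε1 : ε < 1) (c : ℕ) (hc : 1 ≤ c) :
    (μ {ω : Ω | ∃ t : ℕ, 1 ≤ t ∧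
        (∑ τ ∈ Icc 1 t, X τ ω) ≥ (c : ℝ) ∧
        (∑ τ ∈ Icc 1 t, (μ[X τ | ℱ (τ - 1)]) ω) ≤ (c : ℝ) * (1 - ε / (1 + ε))}).toReal
      ≤ Real.exp (-(ε ^ 2 * (c : ℝ)) / (2 * (1 + ε) ^ 2)) := by
  set B := {ω : Ω | ∃ t : ℕ, 1 ≤ t ∧
        (∑ τ ∈ Icc 1 t, X τ ω) ≥ (c : ℝ) ∧
        (∑ τ ∈ Icc 1 t, (μ[X τ | ℱ (τ - 1)]) ω) ≤ (c : ℝ) * (1 - ε / (1 + ε))} with hBdef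
  have h1ε : (0:ℝ) < 1 + ε := by linarith
  set L := Real.log (1 + ε) with hLdef
  have hL : 0 < L := Real.log_pos (by linarith)
  have hexpL : Real.exp L = 1 + ε := Real.exp_log h1ε
  set P : ℕ → Ω → ℝ := fun τ => μ[X τ | ℱ (τ - 1)] with hPdef
  set M : ℕ → Ω → ℝ := fun t ω =>
    Real.exp ((∑ τ ∈ Icc 1 t, X τ ω) * L - ε * ∑ τ ∈ Icc 1 t, P τ ω) with hMdef
  have hX01 : ∀ τ, 1 ≤ τ → ∀ ω, 0 ≤ X τ ω ∧ X τ ω ≤ 1 := by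
    intro τ hτ ω; rcases hval τ hτ ω with h | h <;> simp [h]
  have hXint : ∀ τ, 1 ≤ τ → Integrable (X τ) μ := by
    intro τ hτ
    refine Integrable.mono' (integrable_const 1)
      (((hmeas τ hτ).mono (ℱ.le τ)).aestronglyMeasurable) ?_
    refine Filter.Eventually.of_forall fun ω => ?_
    rcases hval τ hτ ω with h | h <;> simp [h]
  have hPnn : ∀ᵐ ω ∂μ, ∀ τ : ℕ, 1 ≤ τ → 0 ≤ P τ ω := by
    rw [ae_all_iff]
    intro τ
    by_cases hτ : 1 ≤ τ
    · filter_upwards [condExp_nonneg (μ := μ) (m := ℱ (τ - 1))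
        (Filter.Eventually.of_forall fun ω => (hX01 τ hτ ω).1)] with ω hω
      intro _; exact hω
    · filter_upwards with ω h; exact absurd h hτ
  have hMadp : StronglyAdapted ℱ M := by
    intro t
    have hS : StronglyMeasurable[ℱ t] fun ω => ∑ τ ∈ Icc 1 t, X τ ω :=
      Finset.stronglyMeasurable_fun_sum _ fun τ hτ =>
        ((hmeas τ (mem_Icc.mp hτ).1).mono (ℱ.mono (mem_Icc.mp hτ).2))
    have hQ : StronglyMeasurable[ℱ t] fun ω => ∑ τ ∈ Icc 1 t, P τ ω :=
      Finset.stronglyMeasurable_fun_sum _ fun τ hτ =>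
        (stronglyMeasurable_condExp.mono
          (ℱ.mono (le_trans (Nat.sub_le τ 1) (mem_Icc.mp hτ).2)))
    exact Real.continuous_exp.comp_stronglyMeasurable ((hS.mul_const L).sub (hQ.const_mul ε))
  have hMnn : ∀ t ω, 0 ≤ M t ω := fun t ω => (Real.exp_pos _).le
  have hMbd : ∀ t, ∀ᵐ ω ∂μ, ‖M t ω‖ ≤ Real.exp (t * L) := by
    intro t
    filter_upwards [hPnn] with ω hω
    rw [Real.norm_eq_abs, abs_of_nonneg (hMnn t ω)]
    apply Real.exp_le_exp.mpr
    have hSle : (∑ τ ∈ Icc 1 t, X τ ω) ≤ t := by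
      calc (∑ τ ∈ Icc 1 t, X τ ω) ≤ ∑ τ ∈ Icc 1 t, 1 :=
            Finset.sum_le_sum fun τ hτ => (hX01 τ (mem_Icc.mp hτ).1 ω).2
        _ = t := by simp [Nat.card_Icc]
    have hQnn : 0 ≤ ∑ τ ∈ Icc 1 t, P τ ω :=
      Finset.sum_nonneg fun τ hτ => hω τ (mem_Icc.mp hτ).1
    have h1 : (∑ τ ∈ Icc 1 t, X τ ω) * L ≤ t * L :=
      mul_le_mul_of_nonneg_right hSle hL.le
    nlinarith
  have hMint : ∀ t, Integrable (M t) μ := fun t =>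
    Integrable.mono' (integrable_const _)
      (((hMadp t).mono (ℱ.le t)).aestronglyMeasurable) (hMbd t)
  have hMsuper : Supermartingale M ℱ μ := by
    refine supermartingale_nat hMadp hMint fun t => ?_
    set g : Ω → ℝ := fun ω => M t ω * Real.exp (-(ε * P (t+1) ω)) with hgdef
    set f : Ω → ℝ := fun ω => 1 + ε * X (t+1) ω with hfdef
    have hsplit : M (t+1) = g * f := by
      funext ω
      have he : Real.exp (X (t+1) ω * L) = 1 + ε * X (t+1) ω := by
        rcases hval (t+1) (by omega) ω with h | h <;> simp [h, hexpL]
      simp only [hMdef, hgdef, hfdef, Pi.mul_apply]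
      rw [show ((∑ τ ∈ Icc 1 (t+1), X τ ω) * L - ε * ∑ τ ∈ Icc 1 (t+1), P τ ω)
          = (((∑ τ ∈ Icc 1 t, X τ ω) * L - ε * ∑ τ ∈ Icc 1 t, P τ ω)
            + (-(ε * P (t+1) ω))) + X (t+1) ω * L from by
        rw [Finset.sum_Icc_succ_top (Nat.one_le_iff_ne_zero.mpr (Nat.succ_ne_zero t)),
            Finset.sum_Icc_succ_top (Nat.one_le_iff_ne_zero.mpr (Nat.succ_ne_zero t))]
        ring]
      rw [Real.exp_add, Real.exp_add, he]
    have hP1 : StronglyMeasurable[ℱ t] (P (t+1)) := stronglyMeasurable_condExp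
    have hgmeas : StronglyMeasurable[ℱ t] g :=
      (hMadp t).mul (Real.continuous_exp.comp_stronglyMeasurable ((hP1.const_mul ε).neg))
    have hfmeas : StronglyMeasurable[m0] f :=
      stronglyMeasurable_const.add
        (((hmeas (t+1) (by omega)).mono (ℱ.le (t+1))).const_mul ε)
    have hfint : Integrable f μ :=
      (integrable_const (1:ℝ)).add ((hXint (t+1) (by omega)).const_mul ε)
    have hf01 : ∀ ω, 0 ≤ f ω ∧ f ω ≤ 1 + ε := by
      intro ω
      rcases hval (t+1) (by omega) ω with h | h <;>
        constructor <;> simp [hfdef, h] <;> linarith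
    have hgfbd : ∀ᵐ ω ∂μ, ‖(g * f) ω‖ ≤ Real.exp (t * L) * (1 + ε) := by
      filter_upwards [hMbd t, hPnn] with ω h1 h2
      have hgnn : 0 ≤ g ω := mul_nonneg (hMnn t ω) (Real.exp_pos _).le
      have hgle : g ω ≤ Real.exp (t * L) := by
        have hexp1 : Real.exp (-(ε * P (t+1) ω)) ≤ 1 := by
          rw [Real.exp_le_one_iff]
          have h3 := h2 (t+1) (by omega)
          nlinarith
        rw [Real.norm_eq_abs, abs_of_nonneg (hMnn t ω)] at h1
        calc g ω ≤ M t ω * 1 := mul_le_mul_of_nonneg_left hexp1 (hMnn t ω)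
          _ ≤ Real.exp (t * L) := by rw [mul_one]; exact h1
      rw [Pi.mul_apply, Real.norm_eq_abs, abs_of_nonneg (mul_nonneg hgnn (hf01 ω).1)]
      exact mul_le_mul hgle (hf01 ω).2 (hf01 ω).1 (Real.exp_pos _).le
    have hgfint : Integrable (g * f) μ :=
      Integrable.mono' (integrable_const _)
        (((hgmeas.mono (ℱ.le t)).mul hfmeas).aestronglyMeasurable) hgfbd
    have hcond : μ[f | ℱ t] =ᵐ[μ] fun ω => 1 + ε * P (t+1) ω := by
      have h1 : f = (fun _ => (1:ℝ)) + (ε • X (t+1)) := by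
        funext ω; simp [hfdef, smul_eq_mul]
      rw [h1]
      calc μ[(fun _ => (1:ℝ)) + (ε • X (t+1)) | ℱ t]
          =ᵐ[μ] μ[(fun _ => (1:ℝ)) | ℱ t] + μ[ε • X (t+1) | ℱ t] :=
            condExp_add (integrable_const 1) ((hXint (t+1) (by omega)).smul ε) _
        _ =ᵐ[μ] fun ω => 1 + ε * P (t+1) ω := by
            have h2 := condExp_smul (μ := μ) (m := ℱ t) ε (X (t+1))
            filter_upwards [h2] with ω hω
            simp only [Pi.add_apply, condExp_const (ℱ.le t), hω, Pi.smul_apply,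
              smul_eq_mul]
            rfl
    have hmul := condExp_mul_of_stronglyMeasurable_left hgmeas hgfint hfint
    rw [hsplit]
    filter_upwards [hmul, hcond] with ω h1 h2
    rw [h1, Pi.mul_apply, h2]
    have hy := Real.add_one_le_exp (ε * P (t+1) ω)
    have hexp := Real.exp_pos (-(ε * P (t+1) ω))
    have key : Real.exp (-(ε * P (t+1) ω)) * (1 + ε * P (t+1) ω) ≤ 1 := by
      have h3 : Real.exp (-(ε * P (t+1) ω)) * (1 + ε * P (t+1) ω)
          ≤ Real.exp (-(ε * P (t+1) ω)) * Real.exp (ε * P (t+1) ω) :=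
        mul_le_mul_of_nonneg_left (by linarith) hexp.le
      rwa [← Real.exp_add, neg_add_cancel, Real.exp_zero] at h3
    calc g ω * (1 + ε * P (t+1) ω)
        = M t ω * (Real.exp (-(ε * P (t+1) ω)) * (1 + ε * P (t+1) ω)) := by
          simp only [hgdef]; ring
      _ ≤ M t ω * 1 := mul_le_mul_of_nonneg_left key (hMnn t ω)
      _ = M t ω := mul_one _
  set K := Real.exp (c * L - ε * ((c : ℝ) * (1 - ε / (1 + ε)))) with hKdef
  have hK : 0 < K := Real.exp_pos _
  have hM0 : ∫ ω, M 0 ω ∂μ = 1 := by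
    have h0 : M 0 = fun _ => 1 := by funext ω; simp [hMdef]
    rw [h0]; simp
  have hsub : B ⊆ ⋃ n, {ω | ∃ t ≤ n, K ≤ M t ω} := by
    rintro ω ⟨t, ht1, hXc, hPc⟩
    refine Set.mem_iUnion.mpr ⟨t, t, le_refl t, ?_⟩
    simp only [hKdef, hMdef]
    apply Real.exp_le_exp.mpr
    simp only [hPdef]
    have h1 : (c : ℝ) * L ≤ (∑ τ ∈ Icc 1 t, X τ ω) * L :=
      mul_le_mul_of_nonneg_right hXc hL.le
    have h2 : ε * (∑ τ ∈ Icc 1 t, (μ[X τ | ℱ (τ - 1)]) ω)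
        ≤ ε * ((c : ℝ) * (1 - ε / (1 + ε))) := mul_le_mul_of_nonneg_left hPc hε0.le
    linarith
  have hmono : Monotone (fun n => {ω | ∃ t ≤ n, K ≤ M t ω}) := by
    rintro a b hab ω ⟨t, hta, htK⟩; exact ⟨t, le_trans hta hab, htK⟩
  have heach : ∀ n, μ {ω | ∃ t ≤ n, K ≤ M t ω} ≤ ENNReal.ofReal (1/K) := by
    intro n
    have h := aux_maximal hMsuper hMnn hK n
    rw [hM0] at h
    have hle : (μ {ω | ∃ t ≤ n, K ≤ M t ω}).toReal ≤ 1/K := by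
      rw [le_div_iff₀ hK]; linarith
    exact (ENNReal.le_ofReal_iff_toReal_le (measure_ne_top μ _) (by positivity)).mpr hle
  have hfinal : μ B ≤ ENNReal.ofReal (1/K) := by
    refine le_trans (measure_mono hsub) ?_
    rw [Directed.measure_iUnion hmono.directed_le]
    exact iSup_le heach
  have htoReal : (μ B).toReal ≤ 1/K :=
    ENNReal.toReal_le_of_le_ofReal (by positivity) hfinal
  refine le_trans htoReal ?_
  rw [hKdef, one_div, ← Real.exp_neg, Real.exp_le_exp, neg_div]
  have hx0 : 0 ≤ ε/(1+ε) := by positivity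
  have hx1 : ε/(1+ε) ≤ 1/2 := by
    rw [div_le_div_iff₀ h1ε (by norm_num)]; linarith
  have hlog' : ε/(1+ε) + (ε/(1+ε))^2/2 ≤ L := by
    have h1x : 1 - ε/(1+ε) = (1+ε)⁻¹ := by field_simp; ring
    have h := aux_log hx0 hx1
    rw [h1x, Real.log_inv, neg_neg] at h
    rw [hLdef]; exact h
  have hcpos : (0:ℝ) ≤ (c:ℝ) := Nat.cast_nonneg c
  have hgoal : (ε^2*(c:ℝ))/(2*(1+ε)^2) + ε*((c:ℝ)*(1-ε/(1+ε))) ≤ (c:ℝ)*L := by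
    have hmulc := mul_le_mul_of_nonneg_left hlog' hcpos
    have e1 : ε*((c:ℝ)*(1-ε/(1+ε))) = (c:ℝ)*(ε/(1+ε)) := by
      field_simp; ring
    have e2 : (ε^2*(c:ℝ))/(2*(1+ε)^2) = (c:ℝ)*((ε/(1+ε))^2/2) := by
      field_simp
    rw [e1, e2]; linarith
  linarith
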